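/- Let q_1,…,q_n be positive reals with partial sums F_0 = 0 and F_k = q_1+⋯+q_k. For any index t with 1 ≤ t ≤ n-1, if q_t < q_{t+1} then q_{t+1}/(F_{t-1}+q_{t+1}) + q_t/F_{t+1} < q_t/F_t + q_{t+1}/F_{t+1}. That is, swapping two adjacent entries into increasing order strictly increases the sum ∑_ℓ q_ℓ/F_ℓ. -/

import Mathlib

theorem swap_increases_sum (n : ℕ) (hn : 2 ≤ n) (q : ℕ → ℝ)
    (hq : ∀ i ∈ Finset.Icc 1 n, 0 < q i)
    (F : ℕ → ℝ) (hF : ∀ k, F k = ∑ i ∈ Finset.Icc 1 k, q i)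
    (t : ℕ) (ht1 : 1 ≤ t) (ht2 : t ≤ n - 1) (hqt : q t < q (t + 1)) :
    q (t + 1) / (F (t - 1) + q (t + 1)) + q t / F (t + 1) <
      q t / F t + q (t + 1) / F (t + 1) := by
  obtain ⟨s, rfl⟩ : ∃ s, t = s + 1 := ⟨t - 1, by omega⟩
  simp only [Nat.add_sub_cancel]
  have hx : 0 < q (s + 1) := hq (s + 1) (Finset.mem_Icc.mpr ⟨by omega, by omega⟩)
  have hy : 0 < q (s + 1 + 1) := hq (s + 1 + 1) (Finset.mem_Icc.mpr ⟨by omega, by omega⟩)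
  have ha : 0 ≤ F s := by
    rw [hF]
    apply Finset.sum_nonneg
    intro i hi
    have := Finset.mem_Icc.mp hi
    exact le_of_lt (hq i (Finset.mem_Icc.mpr ⟨this.1, by omega⟩))
  have hFt : F (s + 1) = F s + q (s + 1) := by
    rw [hF, hF, Finset.sum_Icc_succ_top (by omega)]
  have hFt1 : F (s + 1 + 1) = F s + q (s + 1) + q (s + 1 + 1) := by
    rw [hF, Finset.sum_Icc_succ_top (by omega), ← hF, hFt]
  set a := F s
  set x := q (s + 1)
  set y := q (s + 1 + 1)
  rw [hFt, hFt1]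
  have h1 : 0 < a + y := by linarith
  have h2 : 0 < a + x := by linarith
  have h3 : 0 < a + x + y := by linarith
  rw [div_add_div _ _ (ne_of_gt h1) (ne_of_gt h3), div_add_div _ _ (ne_of_gt h2) (ne_of_gt h3),
    div_lt_div_iff₀ (by positivity) (by positivity)]
  nlinarith [mul_pos hx hy, mul_pos (mul_pos hx hy) h3, sq_nonneg (a + x + y)]
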